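/- Let M be a model category which is left proper and in which w ⊔ w is a weak equivalence for every weak equivalence w. Then for all fibrant objects X, Y of M and all parallel morphisms f, g : X → Y, one has L f = L g in the homotopy category Ho Fib(M) if and only if f and g are cylinder homotopic. In particular, the cylinder-homotopy relation is transitive on morphisms between fibrant objects. -/

import Mathlib

open CategoryTheory CategoryTheory.Limits

universe v u

/-- A (closed) model structure on a category `C` with finite limits and colimits,
in the sense of Quillen: classes of cofibrations, fibrations and weak equivalences,
containing all isomorphisms, satisfying two-out-of-three for weak equivalences,
closure under retracts, the lifting axioms and the factorization axioms. -/
structure ModelStructure (C : Type u) [Category.{v} C]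
    [HasFiniteLimits C] [HasFiniteColimits C] where
  cof : MorphismProperty C
  fib : MorphismProperty C
  weq : MorphismProperty C
  cof_of_isIso : ∀ {X Y : C} (f : X ⟶ Y), IsIso f → cof f
  fib_of_isIso : ∀ {X Y : C} (f : X ⟶ Y), IsIso f → fib f
  weq_of_isIso : ∀ {X Y : C} (f : X ⟶ Y), IsIso f → weq f
  weq_comp : ∀ {X Y Z : C} (f : X ⟶ Y) (g : Y ⟶ Z), weq f → weq g → weq (f ≫ g)
  weq_of_comp_left : ∀ {X Y Z : C} (f : X ⟶ Y) (g : Y ⟶ Z), weq f → weq (f ≫ g) → weq g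
  weq_of_comp_right : ∀ {X Y Z : C} (f : X ⟶ Y) (g : Y ⟶ Z), weq g → weq (f ≫ g) → weq f
  cof_retract : ∀ {A B A' B' : C} (f : A ⟶ B) (g : A' ⟶ B')
    (iA : A ⟶ A') (rA : A' ⟶ A) (iB : B ⟶ B') (rB : B' ⟶ B),
    iA ≫ rA = 𝟙 A → iB ≫ rB = 𝟙 B → iA ≫ g = f ≫ iB → g ≫ rB = rA ≫ f → cof g → cof f
  fib_retract : ∀ {A B A' B' : C} (f : A ⟶ B) (g : A' ⟶ B')
    (iA : A ⟶ A') (rA : A' ⟶ A) (iB : B ⟶ B') (rB : B' ⟶ B),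
    iA ≫ rA = 𝟙 A → iB ≫ rB = 𝟙 B → iA ≫ g = f ≫ iB → g ≫ rB = rA ≫ f → fib g → fib f
  weq_retract : ∀ {A B A' B' : C} (f : A ⟶ B) (g : A' ⟶ B')
    (iA : A ⟶ A') (rA : A' ⟶ A) (iB : B ⟶ B') (rB : B' ⟶ B),
    iA ≫ rA = 𝟙 A → iB ≫ rB = 𝟙 B → iA ≫ g = f ≫ iB → g ≫ rB = rA ≫ f → weq g → weq f
  lift_of_weq_cof : ∀ {A B X Y : C} (i : A ⟶ B) (p : X ⟶ Y),
    cof i → weq i → fib p → HasLiftingProperty i p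
  lift_of_weq_fib : ∀ {A B X Y : C} (i : A ⟶ B) (p : X ⟶ Y),
    cof i → fib p → weq p → HasLiftingProperty i p
  factor_cof_triv_fib : ∀ {X Y : C} (f : X ⟶ Y),
    ∃ (Z : C) (i : X ⟶ Z) (p : Z ⟶ Y), cof i ∧ fib p ∧ weq p ∧ i ≫ p = f
  factor_triv_cof_fib : ∀ {X Y : C} (f : X ⟶ Y),
    ∃ (Z : C) (i : X ⟶ Z) (p : Z ⟶ Y), cof i ∧ weq i ∧ fib p ∧ i ≫ p = f

namespace ModelStructure

variable {C : Type u} [Category.{v} C] [HasFiniteLimits C] [HasFiniteColimits C]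
  (M : ModelStructure C)

/-- An object is fibrant if the unique morphism to the terminal object is a fibration. -/
def Fibrant (X : C) : Prop := M.fib (terminal.from X)

/-- An object is cofibrant if the unique morphism from the initial object is a cofibration. -/
def Cofibrant (X : C) : Prop := M.cof (initial.to X)

/-- A cylinder for `X`: a cofibration `ins : X ⊔ X ⟶ Z` and a weak equivalence `p : Z ⟶ X`
whose composite is the fold map. -/
structure Cylinder (X : C) where
  Z : C
  ins : (X ⨿ X) ⟶ Z
  p : Z ⟶ X
  cof_ins : M.cof ins
  weq_p : M.weq p
  ins_p : ins ≫ p = coprod.desc (𝟙 X) (𝟙 X)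

/-- `f` and `g` are cylinder homotopic if there is a cylinder homotopy from `f` to `g`. -/
def CylinderHomotopic {X Y : C} (f g : X ⟶ Y) : Prop :=
  ∃ (cyl : M.Cylinder X) (H : cyl.Z ⟶ Y),
    coprod.inl ≫ cyl.ins ≫ H = f ∧ coprod.inr ≫ cyl.ins ≫ H = g

/-- A path object for `Y`: a weak equivalence `s : Y ⟶ P` and a fibration `pr : P ⟶ Y ⨯ Y`
whose composite is the diagonal. -/
structure PathObject (Y : C) where
  P : C
  pr : P ⟶ (Y ⨯ Y)
  s : Y ⟶ P
  fib_pr : M.fib pr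
  weq_s : M.weq s
  s_pr : s ≫ pr = prod.lift (𝟙 Y) (𝟙 Y)

/-- `f` and `g` are path homotopic if there is a path homotopy from `f` to `g`. -/
def PathHomotopic {X Y : C} (f g : X ⟶ Y) : Prop :=
  ∃ (po : M.PathObject Y) (K : X ⟶ po.P),
    K ≫ po.pr ≫ prod.fst = f ∧ K ≫ po.pr ≫ prod.snd = g

/-- Left properness: weak equivalences are closed under pushouts along cofibrations. -/
def LeftProper : Prop :=
  ∀ ⦃A B X P : C⦄ (f : A ⟶ X) (g : A ⟶ B) (h : X ⟶ P) (k : B ⟶ P),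
    IsPushout f g h k → M.cof g → M.weq f → M.weq k

/-- Right properness: weak equivalences are closed under pullbacks along fibrations. -/
def RightProper : Prop :=
  ∀ ⦃P X Y B : C⦄ (fst : P ⟶ X) (snd : P ⟶ Y) (f : X ⟶ B) (g : Y ⟶ B),
    IsPullback fst snd f g → M.fib g → M.weq f → M.weq snd

/-- The weak equivalences of the full subcategory of fibrant objects. -/
def weqFib : MorphismProperty (ObjectProperty.FullSubcategory M.Fibrant) := fun _ _ f => M.weq f.hom

/-- The cylinder homotopy relation on the full subcategory of fibrant objects. -/
def cylRel : HomRel (ObjectProperty.FullSubcategory M.Fibrant) :=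
  fun {X Y} f g => M.CylinderHomotopic (X := X.obj) (Y := Y.obj) f.hom g.hom

/-- The weak equivalences of the full subcategory of cofibrant objects. -/
def weqCof : MorphismProperty (ObjectProperty.FullSubcategory M.Cofibrant) := fun _ _ f => M.weq f.hom

/-- The path homotopy relation on the full subcategory of cofibrant objects. -/
def pathRel : HomRel (ObjectProperty.FullSubcategory M.Cofibrant) :=
  fun {X Y} f g => M.PathHomotopic (X := X.obj) (Y := Y.obj) f.hom g.hom

end ModelStructure

attribute [simp] coprod.inl_desc coprod.inr_desc coprod.inl_desc_assoc coprod.inr_desc_assoc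

namespace ModelStructure

variable {C : Type u} [Category.{v} C] [HasFiniteLimits C] [HasFiniteColimits C]
  (M : ModelStructure C)

lemma cof_of_llp {X Y : C} (f : X ⟶ Y)
    (h : ∀ {A B : C} (p : A ⟶ B), M.fib p → M.weq p → HasLiftingProperty f p) :
    M.cof f := by
  obtain ⟨Z, i, p, hi, hp, hwp, hfac⟩ := M.factor_cof_triv_fib f
  haveI := h p hp hwp
  have sq : CommSq i f p (𝟙 Y) := ⟨by simp [hfac]⟩
  exact M.cof_retract f i (𝟙 X) (𝟙 X) sq.lift p (by simp) sq.fac_right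
    (by simpa using sq.fac_left.symm) (by simp [hfac]) hi

lemma fib_of_rlp {X Y : C} (p : X ⟶ Y)
    (h : ∀ {A B : C} (i : A ⟶ B), M.cof i → M.weq i → HasLiftingProperty i p) :
    M.fib p := by
  obtain ⟨Z, i, q, hi, hwi, hq, hfac⟩ := M.factor_triv_cof_fib p
  haveI := h i hi hwi
  have sq : CommSq (𝟙 X) i p q := ⟨by simp [hfac]⟩
  exact M.fib_retract p q i sq.lift (𝟙 Y) (𝟙 Y) sq.fac_left (by simp)
    (by simp [hfac]) (by simpa using sq.fac_right.symm) hq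

lemma cof_comp {X Y Z : C} (f : X ⟶ Y) (g : Y ⟶ Z) (hf : M.cof f) (hg : M.cof g) :
    M.cof (f ≫ g) := by
  apply M.cof_of_llp
  intro A B p hp hwp
  haveI := M.lift_of_weq_fib f p hf hp hwp
  haveI := M.lift_of_weq_fib g p hg hp hwp
  infer_instance

lemma fib_comp {X Y Z : C} (f : X ⟶ Y) (g : Y ⟶ Z) (hf : M.fib f) (hg : M.fib g) :
    M.fib (f ≫ g) := by
  apply M.fib_of_rlp
  intro A B i hi hwi
  haveI := M.lift_of_weq_cof i f hi hwi hf
  haveI := M.lift_of_weq_cof i g hi hwi hg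
  infer_instance

/-- Cofibrations are stable under cobase change: in a pushout square, the cobase change
of the cofibration `g` along `f` is the map `h`. -/
lemma cof_of_isPushout {A B X P : C} {f : A ⟶ X} {g : A ⟶ B} {h : X ⟶ P} {k : B ⟶ P}
    (sq : IsPushout f g h k) (hg : M.cof g) : M.cof h := by
  apply M.cof_of_llp
  intro W V p hp hwp
  haveI := M.lift_of_weq_fib g p hg hp hwp
  constructor
  intro u v sq'
  have sq2 : CommSq (f ≫ u) g p (k ≫ v) := ⟨by
    rw [Category.assoc, sq'.w, ← Category.assoc, sq.w, Category.assoc]⟩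
  refine ⟨⟨⟨sq.desc u sq2.lift sq2.fac_left.symm, sq.inl_desc _ _ _, ?_⟩⟩⟩
  apply sq.hom_ext
  · rw [← Category.assoc, sq.inl_desc, sq'.w]
  · rw [← Category.assoc, sq.inr_desc, sq2.fac_right]

lemma extend_along_triv_cof {A B Y : C} (j : A ⟶ B) (hj : M.cof j) (hwj : M.weq j)
    (hY : M.Fibrant Y) (a : A ⟶ Y) : ∃ b : B ⟶ Y, j ≫ b = a := by
  haveI := M.lift_of_weq_cof j (terminal.from Y) hj hwj hY
  have sq : CommSq a j (terminal.from Y) (terminal.from B) := ⟨terminal.hom_ext _ _⟩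
  exact ⟨sq.lift, sq.fac_left⟩

/-- Two maps which become equal after composing with a trivial fibration are
cylinder homotopic. -/
lemma cylinderHomotopic_of_comp_trivFib_eq {X Y B : C} (q : Y ⟶ B)
    (hq : M.fib q) (hwq : M.weq q) (u v : X ⟶ Y) (h : u ≫ q = v ≫ q) :
    M.CylinderHomotopic u v := by
  obtain ⟨Z, n, p, hn, hp, hwp, hnp⟩ := M.factor_cof_triv_fib (coprod.desc (𝟙 X) (𝟙 X))
  haveI := M.lift_of_weq_fib n q hn hq hwq
  have sq : CommSq (coprod.desc u v) n q (p ≫ u ≫ q) := ⟨by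
    rw [← Category.assoc n, hnp]
    apply coprod.hom_ext <;> simp [h]⟩
  refine ⟨⟨Z, n, p, hn, hwp, hnp⟩, sq.lift, ?_, ?_⟩
  · show coprod.inl ≫ n ≫ sq.lift = u
    rw [sq.fac_left]; simp
  · show coprod.inr ≫ n ≫ sq.lift = v
    rw [sq.fac_left]; simp

lemma cylinderHomotopic_refl {X Y : C} (f : X ⟶ Y) : M.CylinderHomotopic f f := by
  obtain ⟨Z, n, p, hn, hp, hwp, hnp⟩ := M.factor_cof_triv_fib (coprod.desc (𝟙 X) (𝟙 X))
  refine ⟨⟨Z, n, p, hn, hwp, hnp⟩, p ≫ f, ?_, ?_⟩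
  · show coprod.inl ≫ n ≫ p ≫ f = f
    rw [reassoc_of% hnp]; simp
  · show coprod.inr ≫ n ≫ p ≫ f = f
    rw [reassoc_of% hnp]; simp

lemma cylinderHomotopic_symm {X Y : C} {f g : X ⟶ Y} (h : M.CylinderHomotopic f g) :
    M.CylinderHomotopic g f := by
  obtain ⟨cyl, H, h0, h1⟩ := h
  refine ⟨⟨cyl.Z, (coprod.braiding X X).hom ≫ cyl.ins, cyl.p,
    M.cof_comp _ _ (M.cof_of_isIso _ inferInstance) cyl.cof_ins, cyl.weq_p, ?_⟩, H, ?_, ?_⟩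
  · rw [Category.assoc, cyl.ins_p]
    apply coprod.hom_ext <;> simp
  · simpa using h1
  · simpa using h0

end ModelStructure
namespace ModelStructure

variable {C : Type u} [Category.{v} C] [HasFiniteLimits C] [HasFiniteColimits C]
  (M : ModelStructure C)

/-- A homotopy between `f` and `g` can be transported, after precomposition with any
morphism `w`, onto any prescribed good cylinder of the source of `w`, provided the
target is fibrant. -/
lemma homotopy_transfer {W X Y : C} (w : W ⟶ X) {f g : X ⟶ Y} (hY : M.Fibrant Y)
    (h : M.CylinderHomotopic f g)
    {ZW : C} {nW : (W ⨿ W) ⟶ ZW} {pW : ZW ⟶ W} (hnW : M.cof nW) (hpW : M.fib pW)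
    (hwpW : M.weq pW) (hfold : nW ≫ pW = coprod.desc (𝟙 W) (𝟙 W)) :
    ∃ HW : ZW ⟶ Y, coprod.inl ≫ nW ≫ HW = w ≫ f ∧ coprod.inr ≫ nW ≫ HW = w ≫ g := by
  obtain ⟨cyl, H, h0, h1⟩ := h
  obtain ⟨Z', j, q, hj, hwj, hq, hjq⟩ := M.factor_triv_cof_fib cyl.p
  have hwq : M.weq q := M.weq_of_comp_left j q hwj (by rw [hjq]; exact cyl.weq_p)
  obtain ⟨H', hH'⟩ := M.extend_along_triv_cof j hj hwj hY H
  haveI := M.lift_of_weq_fib nW q hnW hq hwq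
  have sq : CommSq (coprod.map w w ≫ cyl.ins ≫ j) nW q (pW ≫ w) := ⟨by
    rw [Category.assoc, Category.assoc, hjq, cyl.ins_p, ← Category.assoc nW, hfold]
    apply coprod.hom_ext <;> simp⟩
  refine ⟨sq.lift ≫ H', ?_, ?_⟩
  · rw [reassoc_of% sq.fac_left, hH']
    rw [coprod.inl_map_assoc, h0]
  · rw [reassoc_of% sq.fac_left, hH']
    rw [coprod.inr_map_assoc, h1]

lemma cylinderHomotopic_precomp {W X Y : C} (w : W ⟶ X) {f g : X ⟶ Y}
    (hY : M.Fibrant Y) (h : M.CylinderHomotopic f g) :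
    M.CylinderHomotopic (w ≫ f) (w ≫ g) := by
  obtain ⟨Z, n, p, hn, hp, hwp, hnp⟩ := M.factor_cof_triv_fib (coprod.desc (𝟙 W) (𝟙 W))
  obtain ⟨H, h0, h1⟩ := M.homotopy_transfer w hY h hn hp hwp hnp
  exact ⟨⟨Z, n, p, hn, hwp, hnp⟩, H, h0, h1⟩

lemma cylinderHomotopic_postcomp {X Y Z' : C} {f g : X ⟶ Y} (k : Y ⟶ Z')
    (h : M.CylinderHomotopic f g) : M.CylinderHomotopic (f ≫ k) (g ≫ k) := by
  obtain ⟨cyl, H, h0, h1⟩ := h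
  exact ⟨cyl, H ≫ k, by rw [← reassoc_of% h0], by rw [← reassoc_of% h1]⟩

lemma cylinderHomotopic_trans (hproper : M.LeftProper)
    (hcoprod : ∀ ⦃X' X : C⦄ (w : X' ⟶ X), M.weq w → M.weq (coprod.map w w))
    {X Y : C} {f g h : X ⟶ Y} (h₁ : M.CylinderHomotopic f g)
    (h₂ : M.CylinderHomotopic g h) : M.CylinderHomotopic f h := by
  obtain ⟨c₁, H₁, e10, e11⟩ := h₁
  obtain ⟨c₂, H₂, e20, e21⟩ := h₂
  -- the end inclusion at 1 of the first cylinder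
  set a : X ⟶ c₁.Z := coprod.inr ≫ c₁.ins with ha
  have hap : a ≫ c₁.p = 𝟙 X := by rw [ha, Category.assoc, c₁.ins_p]; simp
  have hwa : M.weq a :=
    M.weq_of_comp_right a c₁.p c₁.weq_p (by rw [hap]; exact M.weq_of_isIso _ inferInstance)
  have hwaa : M.weq (coprod.map a a) := by
    refine M.weq_of_comp_right _ (coprod.map c₁.p c₁.p) (hcoprod c₁.p c₁.weq_p) ?_
    rw [coprod.map_map, hap]
    simpa using M.weq_of_isIso _ inferInstance
  -- `u = a ⊔ 𝟙` is a retract of `a ⊔ a`, hence a weak equivalence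
  set u : (X ⨿ X) ⟶ (c₁.Z ⨿ X) := coprod.map a (𝟙 X) with hu
  have hwu : M.weq u := by
    refine M.weq_retract u (coprod.map a a) (𝟙 _) (𝟙 _)
      (coprod.map (𝟙 c₁.Z) a) (coprod.map (𝟙 c₁.Z) c₁.p) (by simp) ?_ ?_ ?_ hwaa
    all_goals apply coprod.hom_ext <;> simp [hu, hap]
  -- glue the two cylinders
  set R := pushout u c₂.ins with hR
  have PO := IsPushout.of_hasPushout u c₂.ins
  have hwinr : M.weq (pushout.inr u c₂.ins) := hproper u c₂.ins _ _ PO c₂.cof_ins hwu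
  have hcompat : u ≫ coprod.desc c₁.p (𝟙 X) = c₂.ins ≫ c₂.p := by
    rw [hu, coprod.map_desc, c₂.ins_p]; simp [hap]
  set q : R ⟶ X := pushout.desc (coprod.desc c₁.p (𝟙 X)) c₂.p hcompat with hq
  have hwq : M.weq q := by
    refine M.weq_of_comp_left (pushout.inr u c₂.ins) q hwinr ?_
    rw [hq, pushout.inr_desc]; exact c₂.weq_p
  have hg2 : a ≫ H₁ = coprod.inl ≫ c₂.ins ≫ H₂ := by rw [ha, Category.assoc, e11, e20]
  have hHcompat : u ≫ coprod.desc H₁ h = c₂.ins ≫ H₂ := by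
    apply coprod.hom_ext
    · show coprod.inl ≫ u ≫ coprod.desc H₁ h = coprod.inl ≫ c₂.ins ≫ H₂
      rw [hu, coprod.inl_map_assoc, coprod.inl_desc, hg2]
    · show coprod.inr ≫ u ≫ coprod.desc H₁ h = coprod.inr ≫ c₂.ins ≫ H₂
      rw [hu, coprod.inr_map_assoc, coprod.inr_desc, Category.id_comp, e21]
  set HH : R ⟶ Y := pushout.desc (coprod.desc H₁ h) H₂ hHcompat with hHH
  set j₀ : (X ⨿ X) ⟶ R := coprod.map (coprod.inl ≫ c₁.ins) (𝟙 X) ≫ pushout.inl u c₂.ins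
    with hj₀
  obtain ⟨Z₀, i, r, hi, hr, hwr, hir⟩ := M.factor_cof_triv_fib j₀
  have hj₀q : j₀ ≫ q = coprod.desc (𝟙 X) (𝟙 X) := by
    rw [hj₀, hq, Category.assoc, pushout.inl_desc, coprod.map_desc]
    apply coprod.hom_ext <;> simp [c₁.ins_p]
  have hj₀H : coprod.inl ≫ j₀ ≫ HH = f ∧ coprod.inr ≫ j₀ ≫ HH = h := by
    constructor
    · rw [hj₀, hHH, Category.assoc, pushout.inl_desc]
      simp [e10]
    · rw [hj₀, hHH, Category.assoc, pushout.inl_desc]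
      simp [e21]
  refine ⟨⟨Z₀, i, r ≫ q, hi, M.weq_comp r q hwr hwq, ?_⟩, r ≫ HH, ?_, ?_⟩
  · rw [← Category.assoc, hir, hj₀q]
  · show coprod.inl ≫ i ≫ r ≫ HH = f
    rw [← Category.assoc i, hir]; exact hj₀H.1
  · show coprod.inr ≫ i ≫ r ≫ HH = h
    rw [← Category.assoc i, hir]; exact hj₀H.2

end ModelStructure
namespace ModelStructure

variable {C : Type u} [Category.{v} C] [HasFiniteLimits C] [HasFiniteColimits C]
  (M : ModelStructure C)

/-- Key cancellation lemma: if `w` is a weak equivalence, `Y` is fibrant and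
`w ≫ f` is cylinder homotopic to `w ≫ g`, then `f` is cylinder homotopic to `g`. -/
lemma cancel_weq_left (hproper : M.LeftProper)
    (hcoprod : ∀ ⦃X' X : C⦄ (w : X' ⟶ X), M.weq w → M.weq (coprod.map w w))
    {A X Y : C} (w : A ⟶ X) (hw : M.weq w) (hY : M.Fibrant Y) {f g : X ⟶ Y}
    (h : M.CylinderHomotopic (w ≫ f) (w ≫ g)) : M.CylinderHomotopic f g := by
  obtain ⟨ZA, nA, pA, hnA, hpA, hwpA, hfoldA⟩ :=
    M.factor_cof_triv_fib (coprod.desc (𝟙 A) (𝟙 A))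
  obtain ⟨Z, n, p, hn, hp, hwp, hfold⟩ := M.factor_cof_triv_fib (coprod.desc (𝟙 X) (𝟙 X))
  -- transfer the homotopy to the chosen good cylinder of `A`
  obtain ⟨K, k0, k1⟩ := M.homotopy_transfer (𝟙 A) hY h hnA hpA hwpA hfoldA
  rw [Category.id_comp] at k0 k1
  -- a lift comparing the two cylinders
  haveI := M.lift_of_weq_fib nA p hnA hp hwp
  have sqm : CommSq (coprod.map w w ≫ n) nA p (pA ≫ w) := ⟨by
    rw [Category.assoc, hfold, ← Category.assoc nA, hfoldA]
    apply coprod.hom_ext <;> simp⟩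
  set m : ZA ⟶ Z := sqm.lift with hm
  -- the glued object
  have PO := IsPushout.of_hasPushout (coprod.map w w) nA
  have hwinr : M.weq (pushout.inr (coprod.map w w) nA) :=
    hproper _ _ _ _ PO hnA (hcoprod w hw)
  have hcofinl : M.cof (pushout.inl (coprod.map w w) nA) := M.cof_of_isPushout PO hnA
  have hcomm : coprod.map w w ≫ n = nA ≫ m := sqm.fac_left.symm
  set e : pushout (coprod.map w w) nA ⟶ Z := pushout.desc n m hcomm with he
  have hwm : M.weq m := by
    refine M.weq_of_comp_right m p hwp ?_
    rw [hm, sqm.fac_right]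
    exact M.weq_comp pA w hwpA hw
  have hwe : M.weq e := by
    refine M.weq_of_comp_left (pushout.inr (coprod.map w w) nA) e hwinr ?_
    rw [he, pushout.inr_desc]; exact hwm
  have hφcomm : coprod.map w w ≫ coprod.desc f g = nA ≫ K := by
    apply coprod.hom_ext
    · rw [coprod.inl_map_assoc, coprod.inl_desc, ← k0]
    · rw [coprod.inr_map_assoc, coprod.inr_desc, ← k1]
  set φ : pushout (coprod.map w w) nA ⟶ Y := pushout.desc (coprod.desc f g) K hφcomm
    with hφ
  obtain ⟨G₂, c, t, hc, ht, hwt, hct⟩ := M.factor_cof_triv_fib e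
  have hwc : M.weq c := M.weq_of_comp_right c t hwt (by rw [hct]; exact hwe)
  obtain ⟨H₂, hH₂⟩ := M.extend_along_triv_cof c hc hwc hY φ
  refine ⟨⟨G₂, pushout.inl (coprod.map w w) nA ≫ c, t ≫ p,
    M.cof_comp _ _ hcofinl hc, M.weq_comp t p hwt hwp, ?_⟩, H₂, ?_, ?_⟩
  · rw [Category.assoc, ← Category.assoc c, hct, he, pushout.inl_desc_assoc, hfold]
  · show coprod.inl ≫ (pushout.inl (coprod.map w w) nA ≫ c) ≫ H₂ = f
    rw [Category.assoc, hH₂, hφ, pushout.inl_desc]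
    simp
  · show coprod.inr ≫ (pushout.inl (coprod.map w w) nA ≫ c) ≫ H₂ = g
    rw [Category.assoc, hH₂, hφ, pushout.inl_desc]
    simp

end ModelStructure
namespace ModelStructure

variable {C : Type u} [Category.{v} C] [HasFiniteLimits C] [HasFiniteColimits C]
  (M : ModelStructure C)

/-- Chosen cofibrant replacement. -/
noncomputable def gammaObj (X : C) : C := (M.factor_cof_triv_fib (initial.to X)).choose

noncomputable def gammaι (X : C) : (⊥_ C) ⟶ M.gammaObj X :=
  (M.factor_cof_triv_fib (initial.to X)).choose_spec.choose

noncomputable def gammaπ (X : C) : M.gammaObj X ⟶ X :=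
  (M.factor_cof_triv_fib (initial.to X)).choose_spec.choose_spec.choose

lemma gamma_spec (X : C) : M.cof (M.gammaι X) ∧ M.fib (M.gammaπ X) ∧ M.weq (M.gammaπ X) ∧
    M.gammaι X ≫ M.gammaπ X = initial.to X :=
  (M.factor_cof_triv_fib (initial.to X)).choose_spec.choose_spec.choose_spec

lemma gamma_fib (X : C) : M.fib (M.gammaπ X) := (M.gamma_spec X).2.1
lemma gamma_weq (X : C) : M.weq (M.gammaπ X) := (M.gamma_spec X).2.2.1

lemma gamma_cofibrant (X : C) : M.Cofibrant (M.gammaObj X) := by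
  have : initial.to (M.gammaObj X) = M.gammaι X := initial.hom_ext _ _
  rw [Cofibrant, this]
  exact (M.gamma_spec X).1

lemma gamma_fibrant (X : C) (hX : M.Fibrant X) : M.Fibrant (M.gammaObj X) := by
  have : terminal.from (M.gammaObj X) = M.gammaπ X ≫ terminal.from X :=
    terminal.hom_ext _ _
  rw [Fibrant, this]
  exact M.fib_comp _ _ (M.gamma_fib X) hX

lemma exists_gammaMap {X Y : C} (f : X ⟶ Y) :
    ∃ l : M.gammaObj X ⟶ M.gammaObj Y, l ≫ M.gammaπ Y = M.gammaπ X ≫ f := by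
  haveI := M.lift_of_weq_fib (initial.to (M.gammaObj X)) (M.gammaπ Y)
    (M.gamma_cofibrant X) (M.gamma_fib Y) (M.gamma_weq Y)
  have sq : CommSq (initial.to (M.gammaObj Y)) (initial.to (M.gammaObj X))
      (M.gammaπ Y) (M.gammaπ X ≫ f) := ⟨initial.hom_ext _ _⟩
  exact ⟨sq.lift, sq.fac_right⟩

/-- Chosen lift of a morphism to the cofibrant replacements. -/
noncomputable def gammaMap {X Y : C} (f : X ⟶ Y) : M.gammaObj X ⟶ M.gammaObj Y :=
  (M.exists_gammaMap f).choose

lemma gammaMap_spec {X Y : C} (f : X ⟶ Y) :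
    M.gammaMap f ≫ M.gammaπ Y = M.gammaπ X ≫ f := (M.exists_gammaMap f).choose_spec

/-- Any two lifts to the cofibrant replacements are cylinder homotopic. -/
lemma gammaMap_unique {X Y : C} (l₁ l₂ : M.gammaObj X ⟶ M.gammaObj Y)
    (h : l₁ ≫ M.gammaπ Y = l₂ ≫ M.gammaπ Y) : M.CylinderHomotopic l₁ l₂ :=
  M.cylinderHomotopic_of_comp_trivFib_eq (M.gammaπ Y) (M.gamma_fib Y) (M.gamma_weq Y)
    l₁ l₂ h

lemma gammaMap_weq {X Y : C} (f : X ⟶ Y) (hf : M.weq f) : M.weq (M.gammaMap f) := by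
  refine M.weq_of_comp_right _ (M.gammaπ Y) (M.gamma_weq Y) ?_
  rw [M.gammaMap_spec f]
  exact M.weq_comp _ _ (M.gamma_weq X) hf

end ModelStructure
namespace ModelStructure

variable {C : Type u} [Category.{v} C] [HasFiniteLimits C] [HasFiniteColimits C]
  (M : ModelStructure C)

lemma q_sound {X Y : ObjectProperty.FullSubcategory M.Fibrant} {f g : X ⟶ Y}
    (h : M.CylinderHomotopic (X := X.obj) (Y := Y.obj) f.hom g.hom) :
    (Quotient.functor M.cylRel).map f = (Quotient.functor M.cylRel).map g :=
  CategoryTheory.Quotient.sound M.cylRel h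

lemma cylCongruence (hproper : M.LeftProper)
    (hcoprod : ∀ ⦃X' X : C⦄ (w : X' ⟶ X), M.weq w → M.weq (coprod.map w w)) :
    Congruence M.cylRel where
  equivalence :=
    ⟨fun f => M.cylinderHomotopic_refl f.hom,
     fun h => M.cylinderHomotopic_symm h,
     fun h1 h2 => M.cylinderHomotopic_trans hproper hcoprod h1 h2⟩
  comp_left := fun {X Y Z} f {g g'} h => M.cylinderHomotopic_precomp f.hom Z.property h
  comp_right := fun {X Y Z} {f f'} g h => M.cylinderHomotopic_postcomp g.hom h

/-- A weak equivalence between fibrant-cofibrant objects becomes an isomorphism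
in the quotient by the cylinder homotopy relation. -/
lemma quotient_isIso_of_weq_bifib (hproper : M.LeftProper)
    (hcoprod : ∀ ⦃X' X : C⦄ (w : X' ⟶ X), M.weq w → M.weq (coprod.map w w))
    {A B : ObjectProperty.FullSubcategory M.Fibrant} (w : A ⟶ B) (hw : M.weq w.hom)
    (hcA : M.Cofibrant A.obj) (hcB : M.Cofibrant B.obj) :
    IsIso ((Quotient.functor M.cylRel).map w) := by
  obtain ⟨T, j, q, hj, hwj, hq, hjq⟩ := M.factor_triv_cof_fib w.hom
  have hTfib : M.Fibrant T := by
    have : terminal.from T = q ≫ terminal.from B.obj := terminal.hom_ext _ _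
    rw [Fibrant, this]
    exact M.fib_comp _ _ hq B.property
  have hwq : M.weq q := M.weq_of_comp_left j q hwj (by rw [hjq]; exact hw)
  obtain ⟨r, hr⟩ := M.extend_along_triv_cof j hj hwj A.property (𝟙 A.obj)
  have hrj : M.CylinderHomotopic (r ≫ j) (𝟙 T) := by
    refine M.cancel_weq_left hproper hcoprod j hwj hTfib ?_
    have : j ≫ (r ≫ j) = j ≫ 𝟙 T := by rw [← Category.assoc, hr]; simp
    rw [this]
    exact M.cylinderHomotopic_refl _
  haveI := M.lift_of_weq_fib (initial.to B.obj) q hcB hq hwq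
  have sq : CommSq (initial.to T) (initial.to B.obj) q (𝟙 B.obj) := ⟨initial.hom_ext _ _⟩
  set s : B.obj ⟶ T := sq.lift with hsdef
  have hs : s ≫ q = 𝟙 B.obj := sq.fac_right
  have hqs : M.CylinderHomotopic (q ≫ s) (𝟙 T) := by
    refine M.cylinderHomotopic_of_comp_trivFib_eq q hq hwq _ _ ?_
    rw [Category.assoc, hs]; simp
  -- repackage in the full subcategory
  let Tf : ObjectProperty.FullSubcategory M.Fibrant := ⟨T, hTfib⟩
  let jf : A ⟶ Tf := ObjectProperty.homMk j
  let qf : Tf ⟶ B := ObjectProperty.homMk q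
  let rf : Tf ⟶ A := ObjectProperty.homMk r
  let sf : B ⟶ Tf := ObjectProperty.homMk s
  have hwfact : (Quotient.functor M.cylRel).map w =
      (Quotient.functor M.cylRel).map jf ≫ (Quotient.functor M.cylRel).map qf := by
    rw [← CategoryTheory.Functor.map_comp]
    congr 1
    exact InducedCategory.hom_ext hjq.symm
  haveI : IsIso ((Quotient.functor M.cylRel).map jf) := by
    refine ⟨(Quotient.functor M.cylRel).map rf, ?_, ?_⟩
    · rw [← CategoryTheory.Functor.map_comp]
      have : jf ≫ rf = 𝟙 A := InducedCategory.hom_ext hr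
      rw [this, CategoryTheory.Functor.map_id]
    · rw [← CategoryTheory.Functor.map_comp]
      have : (Quotient.functor M.cylRel).map (rf ≫ jf) =
          (Quotient.functor M.cylRel).map (𝟙 Tf) := CategoryTheory.Quotient.sound _ hrj
      rw [this, CategoryTheory.Functor.map_id]
  haveI : IsIso ((Quotient.functor M.cylRel).map qf) := by
    refine ⟨(Quotient.functor M.cylRel).map sf, ?_, ?_⟩
    · rw [← CategoryTheory.Functor.map_comp]
      have : (Quotient.functor M.cylRel).map (qf ≫ sf) =
          (Quotient.functor M.cylRel).map (𝟙 Tf) := CategoryTheory.Quotient.sound _ hqs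
      rw [this, CategoryTheory.Functor.map_id]
    · rw [← CategoryTheory.Functor.map_comp]
      have : sf ≫ qf = 𝟙 B := InducedCategory.hom_ext hs
      rw [this, CategoryTheory.Functor.map_id]
  rw [hwfact]
  infer_instance

/-- The cofibrant replacement functor from fibrant objects to the homotopy quotient. -/
noncomputable def gammaFunctor :
    ObjectProperty.FullSubcategory M.Fibrant ⥤ CategoryTheory.Quotient M.cylRel where
  obj X := (Quotient.functor M.cylRel).obj ⟨M.gammaObj X.obj, M.gamma_fibrant _ X.property⟩
  map {X Y} f := (Quotient.functor M.cylRel).map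
    (show (⟨M.gammaObj X.obj, M.gamma_fibrant _ X.property⟩ : ObjectProperty.FullSubcategory M.Fibrant) ⟶
      ⟨M.gammaObj Y.obj, M.gamma_fibrant _ Y.property⟩ from ObjectProperty.homMk (M.gammaMap f.hom))
  map_id X := by
    have h : M.CylinderHomotopic (M.gammaMap (𝟙 X.obj)) (𝟙 (M.gammaObj X.obj)) := by
      apply M.gammaMap_unique
      rw [M.gammaMap_spec]
      simp
    refine (M.q_sound ?_).trans ((Quotient.functor M.cylRel).map_id _)
    exact h
  map_comp {X Y Z} f g := by
    have h : M.CylinderHomotopic (M.gammaMap (f.hom ≫ g.hom))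
        (M.gammaMap f.hom ≫ M.gammaMap g.hom) := by
      apply M.gammaMap_unique
      rw [M.gammaMap_spec, Category.assoc, M.gammaMap_spec,
        reassoc_of% (M.gammaMap_spec f.hom)]
    refine (M.q_sound ?_).trans ((Quotient.functor M.cylRel).map_comp _ _)
    exact h

lemma gammaFunctor_inverts (hproper : M.LeftProper)
    (hcoprod : ∀ ⦃X' X : C⦄ (w : X' ⟶ X), M.weq w → M.weq (coprod.map w w)) :
    M.weqFib.IsInvertedBy M.gammaFunctor := by
  intro X Y w hw
  exact M.quotient_isIso_of_weq_bifib hproper hcoprod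
    _ (by exact M.gammaMap_weq w.hom hw)
    (M.gamma_cofibrant X.obj) (M.gamma_cofibrant Y.obj)

end ModelStructure

namespace ModelStructure

variable {C : Type u} [Category.{v} C] [HasFiniteLimits C] [HasFiniteColimits C]
  (M : ModelStructure C)

lemma Q_map_eq_of_cylinderHomotopic {X Y : ObjectProperty.FullSubcategory M.Fibrant} {f g : X ⟶ Y}
    (h : M.CylinderHomotopic (X := X.obj) (Y := Y.obj) f.hom g.hom) :
    M.weqFib.Q.map f = M.weqFib.Q.map g := by
  obtain ⟨cyl, H, h0, h1⟩ := h
  obtain ⟨Z', j, p', hj, hwj, hp', hjp'⟩ := M.factor_triv_cof_fib cyl.p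
  have hZfib : M.Fibrant Z' := by
    have : terminal.from Z' = p' ≫ terminal.from X.obj := terminal.hom_ext _ _
    rw [Fibrant, this]; exact M.fib_comp _ _ hp' X.property
  have hwp' : M.weq p' := M.weq_of_comp_left j p' hwj (by rw [hjp']; exact cyl.weq_p)
  obtain ⟨H', hH'⟩ := M.extend_along_triv_cof j hj hwj Y.property H
  let Zf : ObjectProperty.FullSubcategory M.Fibrant := ⟨Z', hZfib⟩
  let af : X ⟶ Zf := ObjectProperty.homMk (coprod.inl ≫ cyl.ins ≫ j : X.obj ⟶ Z')
  let bf : X ⟶ Zf := ObjectProperty.homMk (coprod.inr ≫ cyl.ins ≫ j : X.obj ⟶ Z')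
  let pf : Zf ⟶ X := ObjectProperty.homMk p'
  let Hf : Zf ⟶ Y := ObjectProperty.homMk H'
  have hap : af ≫ pf = 𝟙 X := by
    ext
    show (coprod.inl ≫ cyl.ins ≫ j) ≫ p' = 𝟙 X.obj
    rw [Category.assoc, Category.assoc, hjp', cyl.ins_p]; simp
  have hbp : bf ≫ pf = 𝟙 X := by
    ext
    show (coprod.inr ≫ cyl.ins ≫ j) ≫ p' = 𝟙 X.obj
    rw [Category.assoc, Category.assoc, hjp', cyl.ins_p]; simp
  haveI : IsIso (M.weqFib.Q.map pf) := M.weqFib.Q_inverts pf hwp'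
  have hab : M.weqFib.Q.map af = M.weqFib.Q.map bf := by
    refine (cancel_mono (M.weqFib.Q.map pf)).mp ?_
    rw [← M.weqFib.Q.map_comp, ← M.weqFib.Q.map_comp, hap, hbp]
  have hfa : f = af ≫ Hf := by
    ext
    show f.hom = (coprod.inl ≫ cyl.ins ≫ j) ≫ H'
    rw [Category.assoc, Category.assoc, hH', h0]
  have hgb : g = bf ≫ Hf := by
    ext
    show g.hom = (coprod.inr ≫ cyl.ins ≫ j) ≫ H'
    rw [Category.assoc, Category.assoc, hH', h1]
  rw [hfa, hgb, M.weqFib.Q.map_comp, M.weqFib.Q.map_comp, hab]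

end ModelStructure


open ModelStructure in
/-- If `M` is left proper and `w ⊔ w` is a weak equivalence for every weak equivalence `w`,
then two parallel morphisms between fibrant objects become equal in the homotopy category
(the localization of the fibrant objects at the weak equivalences) if and only if they are
cylinder homotopic. In particular, cylinder homotopy is transitive on morphisms between
fibrant objects. -/
theorem localization_map_eq_iff_cylinderHomotopic_of_fibrant
    {C : Type u} [Category.{v} C] [HasFiniteLimits C] [HasFiniteColimits C]
    (M : ModelStructure C) (hproper : M.LeftProper)
    (hcoprod : ∀ ⦃X' X : C⦄ (w : X' ⟶ X), M.weq w → M.weq (coprod.map w w)) :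
    (∀ (X Y : ObjectProperty.FullSubcategory M.Fibrant) (f g : X ⟶ Y),
      M.weqFib.Q.map f = M.weqFib.Q.map g ↔
        M.CylinderHomotopic (X := X.obj) (Y := Y.obj) f.hom g.hom) ∧
    (∀ (X Y : C), M.Fibrant X → M.Fibrant Y → ∀ f g h : X ⟶ Y,
      M.CylinderHomotopic f g → M.CylinderHomotopic g h → M.CylinderHomotopic f h) := by
  haveI : Congruence M.cylRel := M.cylCongruence hproper hcoprod
  constructor
  · intro X Y f g
    constructor
    · intro hQ
      have hinv := M.gammaFunctor_inverts hproper hcoprod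
      have hfac := Localization.Construction.fac M.gammaFunctor hinv
      have h1 := Functor.congr_hom hfac f
      have h2 := Functor.congr_hom hfac g
      rw [Functor.comp_map] at h1 h2
      rw [hQ] at h1
      have h4 : M.gammaFunctor.map f = M.gammaFunctor.map g := by
        have := h1.symm.trans h2
        rw [cancel_epi, cancel_mono] at this
        exact this
      have h5 : M.CylinderHomotopic (M.gammaMap (X := X.obj) (Y := Y.obj) f.hom)
          (M.gammaMap g.hom) := by
        exact (Quotient.functor_map_eq_iff M.cylRel
          (X := ⟨M.gammaObj X.obj, M.gamma_fibrant _ X.property⟩)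
          (Y := ⟨M.gammaObj Y.obj, M.gamma_fibrant _ Y.property⟩)
          (ObjectProperty.homMk (M.gammaMap f.hom))
          (ObjectProperty.homMk (M.gammaMap g.hom))).mp h4
      have h6 := M.cylinderHomotopic_postcomp (M.gammaπ Y.obj) h5
      rw [M.gammaMap_spec f.hom, M.gammaMap_spec g.hom] at h6
      exact M.cancel_weq_left hproper hcoprod (M.gammaπ X.obj) (M.gamma_weq X.obj)
        Y.property h6
    · intro h
      exact M.Q_map_eq_of_cylinderHomotopic h
  · intro X Y hX hY f g h hfg hgh
    exact M.cylinderHomotopic_trans hproper hcoprod hfg hgh
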